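/- Let A be a Hopf algebra over a commutative ring R with antipode S. If w ∈ A* is a normalized left integral on A, then w ∘ S is a normalized right integral on A. -/

import Mathlib

/-- The convolution product on the dual `A* = Hom_R(A, R)` of a bialgebra `A`:
`(f * g)(a) = Σ f(a₍₁₎) · g(a₍₂₎)`. -/
noncomputable def conv {R A : Type*} [CommRing R] [Ring A] [Bialgebra R A]
    (f g : Module.Dual R A) : Module.Dual R A :=
  LinearMap.mul' R R ∘ₗ TensorProduct.map f g ∘ₗ Coalgebra.comul

/-- A normalized left integral on a bialgebra `A`: an element `w ∈ A*` with
`f * w = f(1) • w` for all `f ∈ A*` and `w(1) = 1`. -/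
def IsNormalizedLeftIntegral {R A : Type*} [CommRing R] [Ring A] [Bialgebra R A]
    (w : Module.Dual R A) : Prop :=
  (∀ f : Module.Dual R A, conv f w = f 1 • w) ∧ w 1 = 1

/-- A normalized right integral on a bialgebra `A`: an element `w ∈ A*` with
`w * f = f(1) • w` for all `f ∈ A*` and `w(1) = 1`. -/
def IsNormalizedRightIntegral {R A : Type*} [CommRing R] [Ring A] [Bialgebra R A]
    (w : Module.Dual R A) : Prop :=
  (∀ f : Module.Dual R A, conv w f = f 1 • w) ∧ w 1 = 1

/-- A normalized two-sided integral on a bialgebra `A`. -/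
def IsNormalizedIntegral {R A : Type*} [CommRing R] [Ring A] [Bialgebra R A]
    (w : Module.Dual R A) : Prop :=
  (∀ f : Module.Dual R A, conv f w = f 1 • w) ∧
  (∀ f : Module.Dual R A, conv w f = f 1 • w) ∧
  w 1 = 1

section AuxIntegral

open Coalgebra TensorProduct HopfAlgebra


variable {R A : Type*} [CommRing R] [Ring A] [HopfAlgebra R A]

lemma sum_counit_smul_eq' {ι : Type*} {a : A} (r : Repr R a ι) :
    ∑ i ∈ r.index, counit (R := R) (r.left i) • r.right i = a := by
  have h := congrArg (TensorProduct.lid R A) (sum_counit_tmul_eq r)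
  simp only [map_sum, _root_.TensorProduct.lid_tmul, one_smul] at h
  exact h

lemma sum_smul_counit_eq' {ι : Type*} {a : A} (r : Repr R a ι) :
    ∑ i ∈ r.index, counit (R := R) (r.right i) • r.left i = a := by
  have h := congrArg (TensorProduct.rid R A) (sum_tmul_counit_eq r)
  simp only [map_sum, _root_.TensorProduct.rid_tmul, one_smul] at h
  exact h

lemma antipode_one' : antipode (R := R) (A := A) 1 = 1 := by
  have := mul_antipode_rTensor_comul_apply (R := R) (A := A) (a := 1)
  simpa [Algebra.TensorProduct.one_def] using this

lemma sublemma1 {ι : Type*} {b : A} (t : Repr R b ι) :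
    ∑ j ∈ t.index, comul (R := R) (t.left j) * ((1:A) ⊗ₜ[R] antipode (R := R) (t.right j))
      = b ⊗ₜ[R] (1:A) := by
  set S : A →ₗ[R] A := antipode (R := R) with hS
  set a₁ : ∀ j : t.ι, Repr R (t.left j) (A × A) := fun j => ℛ R (t.left j) with ha₁
  set a₂ : ∀ j : t.ι, Repr R (t.right j) (A × A) := fun j => ℛ R (t.right j) with ha₂
  set M : A ⊗[R] (A ⊗[R] A) →ₗ[R] A ⊗[R] A :=
    LinearMap.lTensor A (LinearMap.mul' R A ∘ₗ LinearMap.lTensor A S) with hM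
  have key := congrArg M (sum_tmul_tmul_eq t a₁ a₂)
  simp only [map_sum, hM, LinearMap.lTensor_tmul, LinearMap.comp_apply,
    LinearMap.mul'_apply] at key
  calc ∑ j ∈ t.index, comul (R := R) (t.left j) * ((1:A) ⊗ₜ[R] S (t.right j))
      = ∑ j ∈ t.index, ∑ k ∈ (a₁ j).index,
          (a₁ j).left k ⊗ₜ[R] ((a₁ j).right k * S (t.right j)) := by
        refine Finset.sum_congr rfl fun j _ => ?_
        rw [← (a₁ j).eq, Finset.sum_mul]
        simp [Algebra.TensorProduct.tmul_mul_tmul]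
    _ = ∑ j ∈ t.index, ∑ k ∈ (a₂ j).index,
          t.left j ⊗ₜ[R] ((a₂ j).left k * S ((a₂ j).right k)) := key
    _ = ∑ j ∈ t.index, counit (R := R) (t.right j) • (t.left j ⊗ₜ[R] (1:A)) := by
        refine Finset.sum_congr rfl fun j _ => ?_
        rw [← tmul_sum, sum_mul_antipode_eq_algebraMap_counit (a₂ j), Algebra.algebraMap_eq_smul_one, tmul_smul]
    _ = (∑ j ∈ t.index, counit (R := R) (t.right j) • t.left j) ⊗ₜ[R] (1:A) := by
        rw [sum_tmul]
        exact Finset.sum_congr rfl fun j _ => (smul_tmul' _ _ _).symm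
    _ = b ⊗ₜ[R] (1:A) := by rw [sum_smul_counit_eq' t]

lemma claimE {ι κ : Type*} {a : A} (r : Repr R a ι)
    (s : ∀ i : r.ι, Repr R (antipode (R := R) (r.left i)) κ) :
    ∑ i ∈ r.index, ∑ j ∈ (s i).index,
      ((s i).left j * r.right i) ⊗ₜ[R] (s i).right j
      = (1:A) ⊗ₜ[R] antipode (R := R) a := by
  set a₁ : ∀ i : r.ι, Repr R (r.left i) (A × A) := fun i => ℛ R (r.left i) with ha₁
  set a₂ : ∀ i : r.ι, Repr R (r.right i) (A × A) := fun i => ℛ R (r.right i) with ha₂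
  set L : A ⊗[R] (A ⊗[R] A) →ₗ[R] A ⊗[R] A :=
    LinearMap.mul' R (A ⊗[R] A) ∘ₗ
      TensorProduct.map (comul ∘ₗ LinearMap.mul' R A ∘ₗ LinearMap.rTensor A (antipode (R := R)))
        (TensorProduct.mk R A A 1 ∘ₗ antipode (R := R)) ∘ₗ
      (TensorProduct.assoc R A A A).symm.toLinearMap with hL
  have hLt : ∀ (x p q : A), L (x ⊗ₜ[R] (p ⊗ₜ[R] q))
      = comul (R := R) (antipode (R := R) x * p) * ((1:A) ⊗ₜ[R] antipode (R := R) q) := by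
    intro x p q
    simp [hL, _root_.TensorProduct.assoc_symm_tmul, Bialgebra.comul_mul]
  have key := congrArg L (sum_tmul_tmul_eq r a₁ a₂)
  simp only [map_sum, hLt] at key
  calc ∑ i ∈ r.index, ∑ j ∈ (s i).index,
        ((s i).left j * r.right i) ⊗ₜ[R] (s i).right j
      = ∑ i ∈ r.index, comul (R := R) (antipode (R := R) (r.left i)) * (r.right i ⊗ₜ[R] (1:A)) := by
        refine Finset.sum_congr rfl fun i _ => ?_
        rw [← (s i).eq, Finset.sum_mul]
        simp [Algebra.TensorProduct.tmul_mul_tmul]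
    _ = ∑ i ∈ r.index, ∑ k ∈ (a₂ i).index,
          comul (R := R) (antipode (R := R) (r.left i) * (a₂ i).left k) * ((1:A) ⊗ₜ[R] antipode (R := R) ((a₂ i).right k)) := by
        refine Finset.sum_congr rfl fun i _ => ?_
        rw [← sublemma1 (a₂ i), Finset.mul_sum]
        refine Finset.sum_congr rfl fun k _ => ?_
        rw [Bialgebra.comul_mul, mul_assoc]
    _ = ∑ i ∈ r.index, ∑ j ∈ (a₁ i).index,
          comul (R := R) (antipode (R := R) ((a₁ i).left j) * (a₁ i).right j) * ((1:A) ⊗ₜ[R] antipode (R := R) (r.right i)) :=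
        key.symm
    _ = ∑ i ∈ r.index, counit (R := R) (r.left i) • ((1:A) ⊗ₜ[R] antipode (R := R) (r.right i)) := by
        refine Finset.sum_congr rfl fun i _ => ?_
        rw [← Finset.sum_mul, ← map_sum, sum_antipode_mul_eq_algebraMap_counit (a₁ i),
          Bialgebra.comul_algebraMap, Algebra.smul_def]
    _ = (1:A) ⊗ₜ[R] antipode (R := R) (∑ i ∈ r.index, counit (R := R) (r.left i) • r.right i) := by
        rw [map_sum, tmul_sum]
        exact Finset.sum_congr rfl fun i _ => by rw [map_smul, tmul_smul]
    _ = (1:A) ⊗ₜ[R] antipode (R := R) a := by rw [sum_counit_smul_eq' r]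

end AuxIntegral

open Coalgebra TensorProduct HopfAlgebra in
theorem left_integral_comp_antipode {R A : Type*} [CommRing R] [Ring A] [HopfAlgebra R A]
    (w : Module.Dual R A) (hw : IsNormalizedLeftIntegral w) :
    IsNormalizedRightIntegral (w ∘ₗ HopfAlgebra.antipode (R := R)) := by
  obtain ⟨hleft, hone⟩ := hw
  constructor
  · intro f
    apply LinearMap.ext; intro a
    have hr : (f 1 • (w ∘ₗ antipode (R := R))) a = f 1 * w (antipode (R := R) a) := by
      simp
    rw [hr]
    set r : Repr R a (A × A) := ℛ R a with hrr
    set s : ∀ i : r.ι, Repr R (antipode (R := R) (r.left i)) (A × A) :=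
      fun i => ℛ R (antipode (R := R) (r.left i)) with hs
    have lhs_eq : conv (w ∘ₗ antipode (R := R)) f a
        = ∑ i ∈ r.index, w (antipode (R := R) (r.left i)) * f (r.right i) := by
      rw [conv]
      simp only [LinearMap.comp_apply]
      rw [← r.eq]
      simp [map_sum]
    have stepA : ∀ i ∈ r.index,
        w (antipode (R := R) (r.left i)) * f (r.right i)
          = ∑ j ∈ (s i).index, f ((s i).left j * r.right i) * w ((s i).right j) := by
      intro i _
      have h := LinearMap.congr_fun (hleft (f ∘ₗ LinearMap.mulRight R (r.right i)))
        (antipode (R := R) (r.left i))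
      rw [conv] at h
      simp only [LinearMap.comp_apply] at h
      rw [← (s i).eq] at h
      simp only [map_sum, TensorProduct.map_tmul, LinearMap.mul'_apply,
        LinearMap.comp_apply, LinearMap.mulRight_apply, LinearMap.smul_apply,
        smul_eq_mul, one_mul] at h
      rw [mul_comm]
      exact h.symm
    rw [lhs_eq, Finset.sum_congr rfl stepA]
    have key := congrArg (LinearMap.mul' R R ∘ₗ TensorProduct.map f w) (claimE r s)
    simp only [map_sum, LinearMap.comp_apply, TensorProduct.map_tmul,
      LinearMap.mul'_apply] at key
    exact key
  · simp [antipode_one', hone]
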